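/- Cancellation lemma (Gaussian elimination): Let ι be a finite type, let V = ι →₀ 𝔽₂ be the free 𝔽₂-vector space with distinguished basis (x_i)_{i∈ι}, and let d : V → V be an 𝔽₂-linear map with d ∘ d = 0. For i, j ∈ ι write d(x_i, x_j) ∈ 𝔽₂ for the coefficient of x_j in d(x_i). Suppose k ≠ l in ι satisfy d(x_k, x_l) = 1. Let ι' = {i ∈ ι | i ≠ k and i ≠ l}, let V' be the free 𝔽₂-vector space on ι', and define d' : V' → V' on basis elements by d'(x_i) = Σ_{j ∈ ι'} (d(x_i, x_j) + d(x_i, x_l)·d(x_k, x_j)) x_j. Then d' ∘ d' = 0, and (V', d') is chain homotopy equivalent to (V, d): there exist 𝔽₂-linear maps f : V → V', g : V' → V and h : V → V with f ∘ d = d' ∘ f, g ∘ d' = d ∘ g, f ∘ g = id_{V'}, and g ∘ f + id_V = d ∘ h + h ∘ d. In particular the homology ker d' / im d' is isomorphic to ker d / im d. -/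

import Mathlib

open LinearMap Submodule

lemma my_sum_split {ι M : Type*} [Fintype ι] [DecidableEq ι] [AddCommMonoid M]
    (k l : ι) (hkl : k ≠ l) (F : ι → M) :
    ∑ j : ι, F j = F k + F l + ∑ j : {i : ι // i ≠ k ∧ i ≠ l}, F ↑j := by
  classical
  have h1 : ∑ j : {i : ι // i ≠ k ∧ i ≠ l}, F ↑j
      = ∑ j ∈ Finset.univ.filter (fun i => i ≠ k ∧ i ≠ l), F j :=
    (Finset.sum_subtype _ (fun x => by simp) F).symm
  rw [h1, ← Finset.sum_filter_add_sum_filter_not Finset.univ (fun i => i ≠ k ∧ i ≠ l) F]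
  have h2 : Finset.univ.filter (fun i : ι => ¬(i ≠ k ∧ i ≠ l)) = {k, l} := by
    ext i
    simp only [Finset.mem_filter, Finset.mem_univ, true_and, Finset.mem_insert,
      Finset.mem_singleton, not_and_or, not_not]
  rw [h2, Finset.sum_pair hkl]
  abel

lemma my_add_self {M : Type*} [AddCommGroup M] [Module (ZMod 2) M] (v : M) : v + v = 0 := by
  have : (2 : ZMod 2) • v = 0 := by
    rw [show (2 : ZMod 2) = 0 by decide, zero_smul]
  rwa [two_smul] at this

lemma my_neg_eq {M : Type*} [AddCommGroup M] [Module (ZMod 2) M] (v : M) : -v = v :=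
  neg_eq_of_add_eq_zero_left (my_add_self v)

lemma my_homotopy_equiv {V V' : Type*}
    [AddCommGroup V] [Module (ZMod 2) V] [AddCommGroup V'] [Module (ZMod 2) V']
    (d : V →ₗ[ZMod 2] V) (d' : V' →ₗ[ZMod 2] V')
    (f : V →ₗ[ZMod 2] V') (g : V' →ₗ[ZMod 2] V) (h : V →ₗ[ZMod 2] V)
    (h1 : f ∘ₗ d = d' ∘ₗ f) (h2 : g ∘ₗ d' = d ∘ₗ g)
    (h3 : f ∘ₗ g = LinearMap.id)
    (h4 : g ∘ₗ f + LinearMap.id = d ∘ₗ h + h ∘ₗ d) :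
    Nonempty ((ker d' ⧸ (range d').comap (ker d').subtype)
      ≃ₗ[ZMod 2] (ker d ⧸ (range d).comap (ker d).subtype)) := by
  have h1' : ∀ v, f (d v) = d' (f v) := fun v => DFunLike.congr_fun h1 v
  have h2' : ∀ v, g (d' v) = d (g v) := fun v => DFunLike.congr_fun h2 v
  have h3' : ∀ v, f (g v) = v := fun v => DFunLike.congr_fun h3 v
  have h4' : ∀ v, g (f v) + v = d (h v) + h (d v) := fun v => DFunLike.congr_fun h4 v
  have hf : ∀ v ∈ ker d, f v ∈ ker d' := by
    intro v hv
    rw [mem_ker] at hv ⊢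
    rw [← h1', hv, map_zero]
  have hg : ∀ v ∈ ker d', g v ∈ ker d := by
    intro v hv
    rw [mem_ker] at hv ⊢
    rw [← h2', hv, map_zero]
  set B : Submodule (ZMod 2) (ker d) := (range d).comap (ker d).subtype with hB
  set B' : Submodule (ZMod 2) (ker d') := (range d').comap (ker d').subtype with hB'
  set Φ0 : ker d →ₗ[ZMod 2] (ker d' ⧸ B') := B'.mkQ ∘ₗ (f.restrict hf) with hΦ0
  have hΦker : B ≤ ker Φ0 := by
    rintro ⟨v, hv⟩ hvB
    obtain ⟨w, hw⟩ := hvB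
    rw [mem_ker, hΦ0, comp_apply, Submodule.mkQ_apply, Submodule.Quotient.mk_eq_zero]
    exact ⟨f w, by simp [LinearMap.restrict_apply, ← h1', hw]⟩
  set Ψ0 : ker d' →ₗ[ZMod 2] (ker d ⧸ B) := B.mkQ ∘ₗ (g.restrict hg) with hΨ0
  have hΨker : B' ≤ ker Ψ0 := by
    rintro ⟨v, hv⟩ hvB
    obtain ⟨w, hw⟩ := hvB
    rw [mem_ker, hΨ0, comp_apply, Submodule.mkQ_apply, Submodule.Quotient.mk_eq_zero]
    exact ⟨g w, by simp [LinearMap.restrict_apply, ← h2', hw]⟩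
  refine ⟨LinearEquiv.ofLinear (B'.liftQ Ψ0 hΨker) (B.liftQ Φ0 hΦker) ?_ ?_⟩
  · apply B.quot_hom_ext
    intro v
    simp only [comp_apply, id_apply, Submodule.mkQ_apply, Submodule.liftQ_apply, hΦ0, hΨ0]
    rw [Submodule.Quotient.eq]
    have hv : d ↑v = 0 := v.2
    refine ⟨h (↑v : V), ?_⟩
    have key : d (h (↑v : V)) = g (f ↑v) + ↑v := by
      rw [h4' ↑v, hv, map_zero, add_zero]
    simp only [hB, mem_comap, coe_subtype, AddSubgroupClass.coe_sub,
      LinearMap.restrict_apply]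
    rw [sub_eq_add_neg, my_neg_eq]
    exact key.symm ▸ rfl
  · apply B'.quot_hom_ext
    intro v
    simp only [comp_apply, id_apply]
    simp only [comp_apply, id_apply, Submodule.mkQ_apply, Submodule.liftQ_apply, hΦ0, hΨ0]
    congr 1
    ext
    simp [LinearMap.restrict_apply, h3']

lemma main_aux {ι : Type*} [Fintype ι] [DecidableEq ι]
    {V V' : Type*} [AddCommGroup V] [Module (ZMod 2) V]
    [AddCommGroup V'] [Module (ZMod 2) V']
    (x : Module.Basis ι (ZMod 2) V)
    (k l : ι) (hkl : k ≠ l)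
    (x' : Module.Basis {i : ι // i ≠ k ∧ i ≠ l} (ZMod 2) V')
    (c : ι → ι → ZMod 2)
    (d : V →ₗ[ZMod 2] V) (d' : V' →ₗ[ZMod 2] V')
    (hdx : ∀ i, d (x i) = ∑ j : ι, c i j • x j)
    (hd' : ∀ i : {i : ι // i ≠ k ∧ i ≠ l},
      d' (x' i) = ∑ j : {i : ι // i ≠ k ∧ i ≠ l},
        (c ↑i ↑j + c ↑i l * c k ↑j) • x' j)
    (hdkl : c k l = 1)
    (hdd : ∀ i m, (∑ j : ι, c i j * c j m) = 0) :
    d' ∘ₗ d' = 0 ∧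
    (∃ (f : V →ₗ[ZMod 2] V') (g : V' →ₗ[ZMod 2] V) (h : V →ₗ[ZMod 2] V),
      f ∘ₗ d = d' ∘ₗ f ∧
      g ∘ₗ d' = d ∘ₗ g ∧
      f ∘ₗ g = LinearMap.id ∧
      g ∘ₗ f + LinearMap.id = d ∘ₗ h + h ∘ₗ d) := by
  classical
  -- key coefficient identity
  have key : ∀ p q : ι, (∑ j : {i : ι // i ≠ k ∧ i ≠ l}, c p ↑j * c ↑j q)
      = c p k * c k q + c p l * c l q := by
    intro p q
    have h0 := hdd p q
    rw [my_sum_split k l hkl (fun j => c p j * c j q)] at h0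
    have h1 := neg_eq_of_add_eq_zero_right h0
    rw [my_neg_eq] at h1
    exact h1.symm
  -- the expansion of a typical quadratic sum
  have expand : ∀ (p q : ι),
      (∑ j : {i : ι // i ≠ k ∧ i ≠ l}, (c p ↑j + c p l * c k ↑j) * (c ↑j q + c ↑j l * c k q))
      = (c p k * c k q + c p l * c l q)
        + (c p k * c k l + c p l * c l l) * c k q
        + c p l * (c k k * c k q + c k l * c l q)
        + c p l * ((c k k * c k l + c k l * c l l) * c k q) := by
    intro p q
    rw [← key p q, ← key p l, ← key k q, ← key k l]
    simp only [Finset.sum_mul, Finset.mul_sum, ← Finset.sum_add_distrib]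
    exact Finset.sum_congr rfl fun j _ => by ring
  have scalar0 : ∀ (p q : ι),
      (∑ j : {i : ι // i ≠ k ∧ i ≠ l}, (c p ↑j + c p l * c k ↑j) * (c ↑j q + c ↑j l * c k q))
      = 0 := by
    intro p q
    rw [expand p q, hdkl]
    generalize c p k = A
    generalize c k q = B
    generalize c p l = C
    generalize c l q = D
    generalize c l l = E
    generalize c k k = G
    revert A B C D E G
    decide
  -- definitions of f, g, h
  set F : ι → V' := fun i =>
    if hik : i = k then 0
    else if hil : i = l then ∑ j : {i : ι // i ≠ k ∧ i ≠ l}, c k ↑j • x' j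
    else x' ⟨i, hik, hil⟩ with hF
  have hFk : F k = 0 := by rw [hF]; simp
  have hFl : F l = ∑ j : {i : ι // i ≠ k ∧ i ≠ l}, c k ↑j • x' j := by
    rw [hF]; simp [hkl.symm]
  have hFs : ∀ j : {i : ι // i ≠ k ∧ i ≠ l}, F ↑j = x' j := by
    intro j; rw [hF]; simp [j.2.1, j.2.2]
  set f : V →ₗ[ZMod 2] V' := x.constr (ZMod 2) F with hf
  set g : V' →ₗ[ZMod 2] V :=
    x'.constr (ZMod 2) (fun j => x ↑j + c ↑j l • x k) with hg
  set H : ι → V := fun i => if i = l then x k else 0 with hH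
  have hHk : H k = 0 := by rw [hH]; simp [hkl]
  have hHl : H l = x k := by rw [hH]; simp
  have hHs : ∀ j : {i : ι // i ≠ k ∧ i ≠ l}, H ↑j = 0 := by
    intro j; rw [hH]; simp [j.2.2]
  set h : V →ₗ[ZMod 2] V := x.constr (ZMod 2) H with hh
  -- identity (A) : d' ∘ d' = 0
  have idA : d' ∘ₗ d' = 0 := by
    refine x'.ext fun i => ?_
    rw [comp_apply, hd' i, map_sum, LinearMap.zero_apply]
    simp only [map_smul, hd']
    simp only [Finset.smul_sum, smul_smul]
    rw [Finset.sum_comm]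
    have : ∀ m : {i : ι // i ≠ k ∧ i ≠ l},
        (∑ j : {i : ι // i ≠ k ∧ i ≠ l},
          ((c ↑i ↑j + c ↑i l * c k ↑j) * (c ↑j ↑m + c ↑j l * c k ↑m)) • x' m) = 0 := by
      intro m
      rw [← Finset.sum_smul, scalar0 ↑i ↑m, zero_smul]
    simp only [this, Finset.sum_const_zero]
  -- identity (B) : f ∘ d = d' ∘ f
  have idB : f ∘ₗ d = d' ∘ₗ f := by
    refine x.ext fun i => ?_
    rw [comp_apply, comp_apply, hdx i, map_sum]
    simp only [map_smul, hf, Module.Basis.constr_basis]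
    rw [my_sum_split k l hkl (fun j => c i j • F j)]
    simp only [hFk, hFl, hFs, smul_zero, zero_add]
    by_cases hik : i = k
    · subst hik
      rw [hFk, map_zero, hdkl, one_smul]
      exact my_add_self _
    by_cases hil : i = l
    · rw [hil, hFl, map_sum]
      simp only [map_smul, hd']
      simp only [Finset.smul_sum, smul_smul]
      rw [Finset.sum_comm]
      simp only [← Finset.sum_smul]
      rw [← Finset.sum_add_distrib]
      refine Finset.sum_congr rfl fun m _ => ?_
      rw [← add_smul]
      congr 1
      have e1 : (∑ j : {i : ι // i ≠ k ∧ i ≠ l}, c k ↑j * (c ↑j ↑m + c ↑j l * c k ↑m))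
          = (∑ j : {i : ι // i ≠ k ∧ i ≠ l}, c k ↑j * c ↑j ↑m)
            + (∑ j : {i : ι // i ≠ k ∧ i ≠ l}, c k ↑j * c ↑j l) * c k ↑m := by
        simp only [Finset.sum_mul, ← Finset.sum_add_distrib]
        exact Finset.sum_congr rfl fun j _ => by ring
      rw [e1, key k ↑m, key k l, hdkl]
      generalize c l l = A
      generalize c k ↑m = B
      generalize c l ↑m = D
      generalize c k k = G
      revert A B D G
      decide
    · have hFi : F i = x' ⟨i, hik, hil⟩ := hFs ⟨i, hik, hil⟩
      rw [hFi, hd' ⟨i, hik, hil⟩]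
      simp only [Finset.smul_sum, smul_smul]
      rw [← Finset.sum_add_distrib]
      refine Finset.sum_congr rfl fun m _ => ?_
      rw [← add_smul]
      congr 1
      ring
  -- identity (C) : g ∘ d' = d ∘ g
  have idC : g ∘ₗ d' = d ∘ₗ g := by
    refine x'.ext fun i => ?_
    rw [comp_apply, comp_apply, hd' i, map_sum]
    simp only [map_smul, hg, Module.Basis.constr_basis]
    -- LHS : ∑ m, coef m • (x ↑m + c ↑m l • x k)
    simp only [smul_add, smul_smul]
    rw [Finset.sum_add_distrib, ← Finset.sum_smul]
    -- RHS
    rw [map_add, map_smul, hdx ↑i, hdx k, Finset.smul_sum]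
    simp only [smul_smul]
    rw [← Finset.sum_add_distrib]
    have e0 : ∀ j : ι, (c ↑i j • x j + (c ↑i l * c k j) • x j)
        = (c ↑i j + c ↑i l * c k j) • x j := fun j => (add_smul _ _ _).symm
    simp only [e0]
    rw [my_sum_split k l hkl (fun j => (c ↑i j + c ↑i l * c k j) • x j)]
    rw [show (c ↑i l + c ↑i l * c k l) = 0 by rw [hdkl]; generalize c ↑i l = A; revert A; decide]
    rw [zero_smul, add_zero, add_comm]
    congr 1
    congr 1
    have e1 : (∑ m : {i : ι // i ≠ k ∧ i ≠ l}, (c ↑i ↑m + c ↑i l * c k ↑m) * c ↑m l)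
        = (∑ m : {i : ι // i ≠ k ∧ i ≠ l}, c ↑i ↑m * c ↑m l)
          + c ↑i l * (∑ m : {i : ι // i ≠ k ∧ i ≠ l}, c k ↑m * c ↑m l) := by
      simp only [Finset.mul_sum, ← Finset.sum_add_distrib]
      exact Finset.sum_congr rfl fun j _ => by ring
    rw [e1, key ↑i l, key k l, hdkl]
    generalize c ↑i k = A
    generalize c ↑i l = C
    generalize c l l = E
    generalize c k k = G
    revert A C E G
    decide
  -- identity (D) : f ∘ g = id
  have idD : f ∘ₗ g = LinearMap.id := by
    refine x'.ext fun j => ?_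
    rw [comp_apply, id_apply]
    simp only [hg, Module.Basis.constr_basis, map_add, map_smul, hf]
    rw [hFs j, hFk, smul_zero, add_zero]
  -- identity (E) : g ∘ f + id = d ∘ h + h ∘ d
  have idE : g ∘ₗ f + LinearMap.id = d ∘ₗ h + h ∘ₗ d := by
    refine x.ext fun i => ?_
    rw [LinearMap.add_apply, LinearMap.add_apply, comp_apply, comp_apply, comp_apply, id_apply]
    rw [show h (x i) = H i from Module.Basis.constr_basis _ _ _ _]
    rw [show f (x i) = F i from Module.Basis.constr_basis _ _ _ _]
    have hhd : h (d (x i)) = c i l • x k := by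
      rw [hdx i, map_sum]
      simp only [map_smul, hh, Module.Basis.constr_basis]
      rw [my_sum_split k l hkl (fun j => c i j • H j)]
      simp only [hHk, hHl, hHs, smul_zero, zero_add, Finset.sum_const_zero, add_zero]
    rw [hhd]
    by_cases hik : i = k
    · subst hik
      rw [hFk, hHk, map_zero, map_zero, zero_add, zero_add, hdkl, one_smul]
    by_cases hil : i = l
    · rw [hil, hFl, hHl, map_sum]
      simp only [map_smul, hg, Module.Basis.constr_basis]
      rw [hdx k, my_sum_split k l hkl (fun j => c k j • x j), hdkl, one_smul]
      simp only [smul_add, smul_smul]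
      rw [Finset.sum_add_distrib, ← Finset.sum_smul, key k l, hdkl]
      rw [show (c k k * 1 + 1 * c l l) = c k k + c l l by ring, add_smul]
      abel
    · have hFi : F i = x' ⟨i, hik, hil⟩ := hFs ⟨i, hik, hil⟩
      have hHi : H i = 0 := hHs ⟨i, hik, hil⟩
      rw [hFi, hHi, map_zero, zero_add]
      rw [show g (x' ⟨i, hik, hil⟩) = x i + c i l • x k from Module.Basis.constr_basis _ _ _ _]
      calc x i + c i l • x k + x i = c i l • x k + (x i + x i) := by abel
        _ = c i l • x k := by rw [my_add_self, add_zero]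
  exact ⟨idA, f, g, h, idB, idC, idD, idE⟩

/-- Cancellation lemma (Gaussian elimination): let `V` be the free `𝔽₂`-vector space
with distinguished basis `(x i)_{i ∈ ι}` (`ι` finite) and `d` a differential on `V`.
Writing `d(x_i, x_j)` for the coefficient of `x j` in `d (x i)`, suppose
`d(x_k, x_l) = 1` for some `k ≠ l`.  Let `V'` be the free `𝔽₂`-vector space on
`ι' = {i // i ≠ k ∧ i ≠ l}` with basis `x'`, and let `d'` be the linear map with
`d' (x' i) = Σ_{j ∈ ι'} (d(x_i, x_j) + d(x_i, x_l)·d(x_k, x_j)) • x' j`.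
Then `d' ∘ d' = 0` and `(V', d')` is chain homotopy equivalent to `(V, d)`:
there are `f : V → V'`, `g : V' → V`, `h : V → V` with `f ∘ d = d' ∘ f`,
`g ∘ d' = d ∘ g`, `f ∘ g = id` and `g ∘ f + id = d ∘ h + h ∘ d`.  In particular
the homology `ker d' / im d'` is isomorphic to `ker d / im d`. -/
theorem cancellation_lemma
    {ι : Type*} [Fintype ι] [DecidableEq ι]
    {V V' : Type*} [AddCommGroup V] [Module (ZMod 2) V]
    [AddCommGroup V'] [Module (ZMod 2) V']
    (x : Module.Basis ι (ZMod 2) V)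
    (d : V →ₗ[ZMod 2] V) (hd : d ∘ₗ d = 0)
    (k l : ι) (hkl : k ≠ l)
    (hdkl : x.repr (d (x k)) l = 1)
    (x' : Module.Basis {i : ι // i ≠ k ∧ i ≠ l} (ZMod 2) V')
    (d' : V' →ₗ[ZMod 2] V')
    (hd' : ∀ i : {i : ι // i ≠ k ∧ i ≠ l},
      d' (x' i) =
        ∑ j : {i : ι // i ≠ k ∧ i ≠ l},
          (x.repr (d (x (i : ι))) (j : ι)
            + x.repr (d (x (i : ι))) l * x.repr (d (x k)) (j : ι)) • x' j) :
    d' ∘ₗ d' = 0 ∧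
    (∃ (f : V →ₗ[ZMod 2] V') (g : V' →ₗ[ZMod 2] V) (h : V →ₗ[ZMod 2] V),
      f ∘ₗ d = d' ∘ₗ f ∧
      g ∘ₗ d' = d ∘ₗ g ∧
      f ∘ₗ g = LinearMap.id ∧
      g ∘ₗ f + LinearMap.id = d ∘ₗ h + h ∘ₗ d) ∧
    Nonempty
      ((LinearMap.ker d' ⧸ (LinearMap.range d').comap (LinearMap.ker d').subtype)
        ≃ₗ[ZMod 2]
       (LinearMap.ker d ⧸ (LinearMap.range d).comap (LinearMap.ker d).subtype)) := by
  classical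
  have hdd : ∀ i m : ι, (∑ j : ι, x.repr (d (x i)) j * x.repr (d (x j)) m) = 0 := by
    intro i m
    have h0 : d (d (x i)) = 0 := by
      have := DFunLike.congr_fun hd (x i)
      simpa using this
    have h1 : d (d (x i)) = ∑ j : ι, x.repr (d (x i)) j • d (x j) := by
      conv_lhs => rw [← x.sum_repr (d (x i))]
      rw [map_sum]
      simp only [map_smul]
    have h2 := congrArg (fun v => x.repr v m) h1
    simp only [h0, map_zero, Finsupp.coe_zero, Pi.zero_apply, map_sum, map_smul,
      Finset.sum_apply', Finsupp.smul_apply, smul_eq_mul] at h2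
    exact h2.symm
  obtain ⟨hA, f, g, h, hB, hC, hD, hE⟩ :=
    main_aux x k l hkl x' (fun i j => x.repr (d (x i)) j) d d'
      (fun i => (x.sum_repr (d (x i))).symm) hd' hdkl hdd
  exact ⟨hA, ⟨f, g, h, hB, hC, hD, hE⟩, my_homotopy_equiv d d' f g h hB hC hD hE⟩
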